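/- If a system of basic CFSMs is multiparty compatible, then it is deadlock-free: no reachable configuration is a stable non-final configuration in which every machine is in a receiving state. -/

import Mathlib

/-- Actions of communicating finite state machines:
`send p q a` is the sending of message `a` from `p` to `q` (action `pq!a`),
`recv p q a` is the reception of `a` from `p` by `q` (action `pq?a`). -/
inductive Act (P A : Type) : Type
  | send (p q : P) (a : A)
  | recv (p q : P) (a : A)

namespace Act
variable {P A : Type}

/-- The subject (principal in charge) of an action. -/
def subj : Act P A → P
  | send p _ _ => p
  | recv _ q _ => q

/-- The partner of an action. -/
def partner : Act P A → P
  | send _ q _ => q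
  | recv p _ _ => p

def isSend : Act P A → Bool
  | send _ _ _ => true
  | recv _ _ _ => false

/-- The duality isomorphism Φ exchanging sends and receives. -/
def dual : Act P A → Act P A
  | send p q a => recv p q a
  | recv p q a => send p q a

end Act

/-- A communicating system: for each participant a CFSM given by its
transition relation and initial state (all machines share the state space `Q`
and alphabet `A`; channels are ordered pairs of participants). -/
structure Sys (P Q A : Type) where
  delta : P → Q → Act P A → Q → Prop
  init : P → Q

/-- A configuration: a local state for each machine and a FIFO buffer word
for each channel. -/
structure Config (P Q A : Type) where
  st : P → Q
  buf : P × P → List A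

variable {P Q A : Type}

/-- One firing of a transition: a send appends to the corresponding buffer,
a receive consumes the head of the corresponding buffer; only the acting
machine changes its local state. -/
inductive Step [DecidableEq P] (S : Sys P Q A) :
    Config P Q A → Act P A → Config P Q A → Prop
  | send {c : Config P Q A} {p q : P} {a : A} {q' : Q} :
      S.delta p (c.st p) (.send p q a) q' →
      Step S c (.send p q a)
        ⟨Function.update c.st p q',
         Function.update c.buf (p, q) (c.buf (p, q) ++ [a])⟩
  | recv {c : Config P Q A} {p q : P} {a : A} {q' : Q} {w : List A} :
      S.delta q (c.st q) (.recv p q a) q' →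
      c.buf (p, q) = a :: w →
      Step S c (.recv p q a)
        ⟨Function.update c.st q q', Function.update c.buf (p, q) w⟩

/-- Multi-step execution labelled by the sequence of fired actions. -/
inductive Steps [DecidableEq P] (S : Sys P Q A) :
    Config P Q A → List (Act P A) → Config P Q A → Prop
  | nil {c} : Steps S c [] c
  | cons {c c' c'' ℓ ℓs} : Step S c ℓ c' → Steps S c' ℓs c'' →
      Steps S c (ℓ :: ℓs) c''

/-- The initial configuration: initial states and empty buffers. -/
def initConfig (S : Sys P Q A) : Config P Q A := ⟨S.init, fun _ => []⟩

def Reach [DecidableEq P] (S : Sys P Q A) (c : Config P Q A) : Prop :=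
  ∃ φ, Steps S (initConfig S) φ c

/-- A configuration is stable when all buffers are empty. -/
def Stable (c : Config P Q A) : Prop := ∀ ch, c.buf ch = []

/-- Machine `p` only performs actions whose subject is `p`. -/
def Proper (S : Sys P Q A) : Prop :=
  ∀ p q ℓ q', S.delta p q ℓ q' → Act.subj ℓ = p

def Deterministic (S : Sys P Q A) : Prop :=
  ∀ p q ℓ q1 q2, S.delta p q ℓ q1 → S.delta p q ℓ q2 → q1 = q2

/-- Every state is directed: all its outgoing actions involve the same partner. -/
def DirectedSys (S : Sys P Q A) : Prop :=
  ∀ p q ℓ1 q1 ℓ2 q2, S.delta p q ℓ1 q1 → S.delta p q ℓ2 q2 →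
    Act.partner ℓ1 = Act.partner ℓ2

/-- No mixed states: no state has both sending and receiving outgoing actions. -/
def NoMixed (S : Sys P Q A) : Prop :=
  ∀ p q ℓ1 q1 ℓ2 q2, S.delta p q ℓ1 q1 → S.delta p q ℓ2 q2 →
    Act.isSend ℓ1 = Act.isSend ℓ2

/-- A system of basic CFSMs: deterministic, directed, no mixed states. -/
def Basic (S : Sys P Q A) : Prop :=
  Proper S ∧ Deterministic S ∧ DirectedSys S ∧ NoMixed S

/-- 1-bounded reachability: reachable by executions in which no intermediate
buffer ever contains more than one message. -/
inductive Reach1 [DecidableEq P] (S : Sys P Q A) : Config P Q A → Prop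
  | init : Reach1 S (initConfig S)
  | step {c ℓ c'} : Reach1 S c → Step S c ℓ c' →
      (∀ ch, (c'.buf ch).length ≤ 1) → Reach1 S c'

/-- Sequences of actions executable from a local state of machine `p`. -/
inductive LocalTr (S : Sys P Q A) (p : P) : Q → List (Act P A) → Prop
  | nil {q} : LocalTr S p q []
  | cons {q q' ℓ ℓs} : S.delta p q ℓ q' → LocalTr S p q' ℓs →
      LocalTr S p q (ℓ :: ℓs)

/-- A transition of the associated CFSM of the subsystem without machine `i`:
a local transition of some machine other than `i` (product automaton,
no buffer constraints). -/
def PStep [DecidableEq P] (S : Sys P Q A) (i : P)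
    (st : P → Q) (ℓ : Act P A) (st' : P → Q) : Prop :=
  ∃ p q', p ≠ i ∧ Act.subj ℓ = p ∧ S.delta p (st p) ℓ q' ∧
    st' = Function.update st p q'

/-- `Match S i st ℓs` : the subsystem without `i` can, from control state `st`,
produce the dual of every action of `ℓs` in order, interleaved with
alternations (internal synchronisations) not involving machine `i`. -/
inductive Match [DecidableEq P] (S : Sys P Q A) (i : P) :
    (P → Q) → List (Act P A) → Prop
  | nil {st} : Match S i st []
  | alt {st st1 st2 p q a ℓs} : p ≠ i → q ≠ i →
      PStep S i st (.send p q a) st1 →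
      PStep S i st1 (.recv p q a) st2 →
      Match S i st2 ℓs → Match S i st ℓs
  | dual {st st' ℓ ℓs} : PStep S i st (Act.dual ℓ) st' →
      Match S i st' ℓs → Match S i st (ℓ :: ℓs)

/-- Multiparty compatibility: from any 1-bounded reachable stable
configuration, any sequence of actions of any machine `i` is matched by dual
actions of the rest of the system, up to alternations not involving `i`. -/
def MultipartyCompatible [DecidableEq P] (S : Sys P Q A) : Prop :=
  ∀ c, Reach1 S c → Stable c →
    ∀ i ℓs, LocalTr S i (c.st i) ℓs → Match S i c.st ℓs

/-- A deadlock configuration: stable, non-final (some machine still has an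
outgoing transition), and every machine is in a receiving state. -/
def Deadlock (S : Sys P Q A) (c : Config P Q A) : Prop :=
  Stable c ∧ (∃ p ℓ q', S.delta p (c.st p) ℓ q') ∧
    (∀ p ℓ q', S.delta p (c.st p) ℓ q' → Act.isSend ℓ = false)
section DFAux
set_option linter.unusedSectionVars false
set_option linter.unreachableTactic false
set_option linter.unnecessarySeqFocus false
set_option linter.unusedTactic false
variable [DecidableEq P] {S : Sys P Q A}

/-- Machine `p` performs no action in `ψ`. -/
def InActs (p : P) (ψ : List (Act P A)) : Prop := ∀ ℓ ∈ ψ, Act.subj ℓ ≠ p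

lemma InActs.nil {p : P} : InActs p ([] : List (Act P A)) := fun _ h => absurd h List.not_mem_nil

lemma InActs.append_left {p : P} {α β : List (Act P A)} (h : InActs p (α ++ β)) : InActs p α :=
  fun ℓ hm => h ℓ (List.mem_append_left _ hm)

lemma InActs.append_right {p : P} {α β : List (Act P A)} (h : InActs p (α ++ β)) : InActs p β :=
  fun ℓ hm => h ℓ (List.mem_append_right _ hm)

lemma InActs.of_cons {p : P} {ℓ : Act P A} {β : List (Act P A)} (h : InActs p (ℓ :: β)) :
    InActs p β := fun x hm => h x (List.mem_cons_of_mem _ hm)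

lemma InActs.head {p : P} {ℓ : Act P A} {β : List (Act P A)} (h : InActs p (ℓ :: β)) :
    Act.subj ℓ ≠ p := h ℓ (List.mem_cons_self)

lemma steps_append {c m n : Config P Q A} {ψ φ : List (Act P A)}
    (h1 : Steps S c ψ m) : Steps S m φ n → Steps S c (ψ ++ φ) n := by
  induction h1 with
  | nil => exact id
  | cons hs _ ih => exact fun h2 => Steps.cons hs (ih h2)

lemma steps_decomp {φ : List (Act P A)} :
    ∀ {β : List (Act P A)} {c n : Config P Q A}, Steps S c (β ++ φ) n →
      ∃ m, Steps S c β m ∧ Steps S m φ n := by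
  intro β
  induction β with
  | nil => exact fun h => ⟨_, Steps.nil, h⟩
  | cons ℓ β' ih =>
    intro c n h
    cases h with
    | cons hs ht =>
      obtain ⟨m, h1, h2⟩ := ih ht
      exact ⟨m, Steps.cons hs h1, h2⟩

lemma Step.st_ne {c c' : Config P Q A} {ℓ : Act P A} (h : Step S c ℓ c') {r : P}
    (hr : Act.subj ℓ ≠ r) : c'.st r = c.st r := by
  cases h with
  | send hd => exact Function.update_of_ne (by simpa [Act.subj] using fun h => hr h.symm) _ _
  | recv hd hb => exact Function.update_of_ne (by simpa [Act.subj] using fun h => hr h.symm) _ _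

lemma steps_st_inacts {p : P} {c m : Config P Q A} {ψ : List (Act P A)}
    (h : Steps S c ψ m) (hp : InActs p ψ) : m.st p = c.st p := by
  induction h with
  | nil => rfl
  | cons hs _ ih => rw [ih hp.of_cons, hs.st_ne hp.head]

/-- the messages sent on channel `ch` along `ψ`, in order. -/
def sentOn (ch : P × P) (ψ : List (Act P A)) : List A :=
  ψ.filterMap fun ℓ => match ℓ with
    | .send u v a => if (u, v) = ch then some a else none
    | .recv _ _ _ => none

@[simp] lemma sentOn_nil (ch : P × P) : sentOn ch ([] : List (Act P A)) = [] := rfl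

lemma sentOn_cons_send (ch : P × P) (u v : P) (a : A) (ψ : List (Act P A)) :
    sentOn ch (Act.send u v a :: ψ) =
      if (u, v) = ch then a :: sentOn ch ψ else sentOn ch ψ := by
  by_cases h : (u, v) = ch <;> simp [sentOn, List.filterMap_cons, h]

lemma sentOn_cons_recv (ch : P × P) (u v : P) (a : A) (ψ : List (Act P A)) :
    sentOn ch (Act.recv u v a :: ψ) = sentOn ch ψ := by
  simp [sentOn, List.filterMap_cons]

lemma sentOn_append (ch : P × P) (α β : List (Act P A)) :
    sentOn ch (α ++ β) = sentOn ch α ++ sentOn ch β := by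
  simp [sentOn, List.filterMap_append]

lemma sentOn_eq_nil {u v : P} {ψ : List (Act P A)} (h : InActs u ψ) :
    sentOn (u, v) ψ = [] := by
  induction ψ with
  | nil => rfl
  | cons ℓ ψ' ih =>
    cases ℓ with
    | send a b x =>
      rw [sentOn_cons_send]
      have : a ≠ u := by simpa [Act.subj] using h.head
      rw [if_neg (by simp [this]), ih h.of_cons]
    | recv a b x => rw [sentOn_cons_recv, ih h.of_cons]

lemma steps_buf {ch : P × P} {c m : Config P Q A} {ψ : List (Act P A)}
    (h : Steps S c ψ m) (hno : ∀ u v a, Act.recv u v a ∈ ψ → (u, v) ≠ ch) :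
    m.buf ch = c.buf ch ++ sentOn ch ψ := by
  induction h with
  | nil => simp
  | @cons c c' c'' ℓ ℓs hs ht ih =>
    have ih' := ih (fun u v a hm => hno u v a (List.mem_cons_of_mem _ hm))
    cases hs with
    | @send p q a q1 hd =>
      rw [ih', sentOn_cons_send]
      by_cases hch : (p, q) = ch
      · subst hch; simp [List.append_assoc]
      · simp [Function.update_of_ne (Ne.symm hch), hch]
    | @recv p q a q1 w hd hb =>
      have hne : (p, q) ≠ ch := hno p q a (List.mem_cons_self)
      rw [ih', sentOn_cons_recv]
      simp [Function.update_of_ne (Ne.symm hne)]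

lemma buf_empty_inacts {u v : P} {c m : Config P Q A} {ψ : List (Act P A)}
    (h : Steps S c ψ m) (hu : InActs u ψ) (hc : c.buf (u, v) = []) :
    m.buf (u, v) = [] := by
  induction h with
  | nil => exact hc
  | @cons c c' c'' ℓ ℓs hs ht ih =>
    apply ih hu.of_cons
    cases hs with
    | @send p q a q1 hd =>
      have : p ≠ u := by simpa [Act.subj] using hu.head
      simpa [Function.update_of_ne (show (u,v) ≠ (p,q) by simp [this.symm])] using hc
    | @recv p q a q1 w hd hb =>
      by_cases hch : (p, q) = (u, v)
      · rw [hch] at hb; rw [hb] at hc; cases hc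
      · simpa [Function.update_of_ne (Ne.symm hch)] using hc

lemma exists_first (p : P) (ψ : List (Act P A)) (h : ¬ InActs p ψ) :
    ∃ β ℓ γ, ψ = β ++ ℓ :: γ ∧ InActs p β ∧ Act.subj ℓ = p := by
  induction ψ with
  | nil => exact absurd InActs.nil h
  | cons ℓ ψ' ih =>
    by_cases hs : Act.subj ℓ = p
    · exact ⟨[], ℓ, ψ', rfl, InActs.nil, hs⟩
    · have : ¬ InActs p ψ' := by
        intro hin; apply h; intro x hx
        rcases List.mem_cons.1 hx with h1 | h2
        · rw [h1]; exact hs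
        · exact hin x h2
      obtain ⟨β, ℓ', γ, rfl, hβ, hsub⟩ := ih this
      exact ⟨ℓ :: β, ℓ', γ, rfl, fun x hx => by
        rcases List.mem_cons.1 hx with h1 | h2
        · rw [h1]; exact hs
        · exact hβ x h2, hsub⟩

/-- apply a pending send by `p0` on channel `(p0,q0)` to a configuration. -/
def pushC (p0 q0 : P) (t1 : Q) (a0 : A) (x : Config P Q A) : Config P Q A :=
  ⟨Function.update x.st p0 t1, Function.update x.buf (p0, q0) (x.buf (p0, q0) ++ [a0])⟩

/-- apply a pending receive by `q0` on channel `(p0,q0)` to a configuration. -/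
def popC (p0 q0 : P) (t2 : Q) (x : Config P Q A) : Config P Q A :=
  ⟨Function.update x.st q0 t2, Function.update x.buf (p0, q0) (x.buf (p0, q0)).tail⟩

lemma tail_append_of_ne_nil {x y : List A} (h : x ≠ []) : (x ++ y).tail = x.tail ++ y := by
  cases x with
  | nil => exact absurd rfl h
  | cons a l => simp

lemma step_push {p0 q0 : P} {t1 : Q} {a0 : A} {c c1 : Config P Q A} {ℓ : Act P A}
    (h : Step S c ℓ c1) (hs : Act.subj ℓ ≠ p0) :
    Step S (pushC p0 q0 t1 a0 c) ℓ (pushC p0 q0 t1 a0 c1) := by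
  cases h with
  | @send p q a q1 hd =>
    simp only [Act.subj] at hs
    have hd' : S.delta p ((pushC p0 q0 t1 a0 c).st p) (.send p q a) q1 := by
      simpa [pushC, Function.update_of_ne hs] using hd
    have h2 := Step.send (S := S) hd'
    have hch : ((p, q) : P × P) ≠ (p0, q0) := by simp [hs]
    convert h2 using 1
    simp only [pushC, Config.mk.injEq]
    constructor
    · funext x
      by_cases hx : x = p <;> by_cases hx2 : x = p0 <;>
        simp [Function.update_apply, hx, hx2] <;> (try simp_all) <;> (repeat rw [if_neg (by tauto)]) <;> (try simp_all) <;> try rfl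
    · funext ch
      by_cases hc1 : ch = ((p, q) : P × P) <;> by_cases hc2 : ch = ((p0, q0) : P × P) <;>
        simp [Function.update_apply, hc1, hc2] <;> (try simp_all) <;> (repeat rw [if_neg (by tauto)]) <;> (try simp_all) <;> try rfl
  | @recv p q a q1 w hd hb =>
    simp only [Act.subj] at hs
    have hd' : S.delta q ((pushC p0 q0 t1 a0 c).st q) (.recv p q a) q1 := by
      simpa [pushC, Function.update_of_ne hs] using hd
    by_cases hch : ((p, q) : P × P) = (p0, q0)
    · have hb' : (pushC p0 q0 t1 a0 c).buf (p, q) = a :: (w ++ [a0]) := by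
        simp [pushC, hch, hb.symm.trans (congrArg c.buf hch)]
        rw [← hch, hb]; simp
      have h2 := Step.recv (S := S) hd' hb'
      convert h2 using 1
      simp only [pushC, Config.mk.injEq]
      constructor
      · funext x
        by_cases hx : x = q <;> by_cases hx2 : x = p0 <;>
          simp [Function.update_apply, hx, hx2] <;> (try simp_all) <;> (repeat rw [if_neg (by tauto)]) <;> (try simp_all) <;> try rfl
      · funext ch
        by_cases hc2 : ch = ((p0, q0) : P × P) <;>
          simp [Function.update_apply, hch, hc2] <;> (try simp_all) <;> (repeat rw [if_neg (by tauto)]) <;> (try simp_all) <;> try rfl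
    · have hb' : (pushC p0 q0 t1 a0 c).buf (p, q) = a :: w := by
        simp [pushC, Function.update_of_ne hch, hb]
      have h2 := Step.recv (S := S) hd' hb'
      convert h2 using 1
      simp only [pushC, Config.mk.injEq]
      constructor
      · funext x
        by_cases hx : x = q <;> by_cases hx2 : x = p0 <;>
          simp [Function.update_apply, hx, hx2] <;> (try simp_all) <;> (repeat rw [if_neg (by tauto)]) <;> (try simp_all) <;> try rfl
      · funext ch
        by_cases hc1 : ch = ((p, q) : P × P) <;> by_cases hc2 : ch = ((p0, q0) : P × P) <;>
          simp [Function.update_apply, hc1, hc2] <;> (try simp_all) <;> (repeat rw [if_neg (by tauto)]) <;> (try simp_all) <;> try rfl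

lemma steps_push {p0 q0 : P} {t1 : Q} {a0 : A} {β : List (Act P A)} :
    ∀ {c m : Config P Q A}, Steps S c β m → InActs p0 β →
      Steps S (pushC p0 q0 t1 a0 c) β (pushC p0 q0 t1 a0 m) := by
  intro c m h
  induction h with
  | nil => exact fun _ => Steps.nil
  | cons hs ht ih =>
    intro hin
    exact Steps.cons (step_push hs hin.head) (ih hin.of_cons)

lemma step_pop {p0 q0 : P} {t2 : Q} {c c1 : Config P Q A} {ℓ : Act P A}
    (h : Step S c ℓ c1) (hs : Act.subj ℓ ≠ q0) (hne : c.buf (p0, q0) ≠ []) :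
    Step S (popC p0 q0 t2 c) ℓ (popC p0 q0 t2 c1) ∧ c1.buf (p0, q0) ≠ [] := by
  cases h with
  | @send p q a q1 hd =>
    simp only [Act.subj] at hs
    have hd' : S.delta p ((popC p0 q0 t2 c).st p) (.send p q a) q1 := by
      simpa [popC, Function.update_of_ne hs] using hd
    constructor
    · have h2 := Step.send (S := S) hd'
      convert h2 using 1
      simp only [popC, Config.mk.injEq]
      constructor
      · funext x
        by_cases hx : x = p <;> by_cases hx2 : x = q0 <;>
          simp [Function.update_apply, hx, hx2] <;> (try simp_all) <;> (repeat rw [if_neg (by tauto)]) <;> (try simp_all) <;> try rfl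
      · funext ch
        by_cases hc1 : ch = ((p, q) : P × P) <;> by_cases hc2 : ch = ((p0, q0) : P × P)
        · -- ch is both channels: (p,q) = (p0,q0)
          subst hc1
          rw [hc2] at *
          simp [Function.update_apply, tail_append_of_ne_nil hne]
        · simp [Function.update_apply, hc1, hc2] <;> (try simp_all) <;> (repeat rw [if_neg (by tauto)]) <;> (try simp_all) <;> try rfl
        · subst hc2
          have : ((p, q) : P × P) ≠ (p0, q0) := fun h => hc1 (by rw [h])
          simp [Function.update_apply, this.symm]
        · simp [Function.update_apply, hc1, hc2]
    · by_cases hch : ((p, q) : P × P) = (p0, q0)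
      · rw [← hch]; simp
      · simpa [Function.update_of_ne (Ne.symm hch)] using hne
  | @recv p q a q1 w hd hb =>
    simp only [Act.subj] at hs
    have hch : ((p, q) : P × P) ≠ (p0, q0) := by simp [hs]
    have hd' : S.delta q ((popC p0 q0 t2 c).st q) (.recv p q a) q1 := by
      simpa [popC, Function.update_of_ne hs] using hd
    have hb' : (popC p0 q0 t2 c).buf (p, q) = a :: w := by
      simp [popC, Function.update_of_ne hch, hb]
    constructor
    · have h2 := Step.recv (S := S) hd' hb'
      convert h2 using 1
      simp only [popC, Config.mk.injEq]
      constructor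
      · funext x
        by_cases hx : x = q <;> by_cases hx2 : x = q0 <;>
          simp [Function.update_apply, hx, hx2] <;> (try simp_all) <;> (repeat rw [if_neg (by tauto)]) <;> (try simp_all) <;> try rfl
      · funext ch
        by_cases hc1 : ch = ((p, q) : P × P) <;> by_cases hc2 : ch = ((p0, q0) : P × P) <;>
          simp [Function.update_apply, hc1, hc2] <;> (try simp_all) <;> (repeat rw [if_neg (by tauto)]) <;> (try simp_all) <;> try rfl
    · simpa [Function.update_of_ne (Ne.symm hch)] using hne

lemma steps_pop {p0 q0 : P} {t2 : Q} {β : List (Act P A)} :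
    ∀ {c m : Config P Q A}, Steps S c β m → InActs q0 β → c.buf (p0, q0) ≠ [] →
      Steps S (popC p0 q0 t2 c) β (popC p0 q0 t2 m) ∧ m.buf (p0, q0) ≠ [] := by
  intro c m h
  induction h with
  | nil => exact fun _ hne => ⟨Steps.nil, hne⟩
  | cons hs ht ih =>
    intro hin hne
    obtain ⟨h1, h2⟩ := step_pop (p0 := p0) (q0 := q0) (t2 := t2) hs hin.head hne
    obtain ⟨h3, h4⟩ := ih hin.of_cons h2
    exact ⟨Steps.cons h1 h3, h4⟩
lemma acts_receiver {d cend : Config P Q A} {β γ : List (Act P A)} {u v : P} {a : A}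
    (h : Steps S d (β ++ Act.send u v a :: γ) cend) (hend : Stable cend) :
    ¬ InActs v (β ++ Act.send u v a :: γ) := by
  intro hin
  obtain ⟨m, h1, h2⟩ := steps_decomp h
  cases h2 with
  | @cons _ m1 _ _ _ hs ht =>
    have hbm1 : m1.buf (u, v) ≠ [] := by
      cases hs with
      | send hd => simp
    have hno : ∀ u' v' a', Act.recv u' v' a' ∈ γ → (u', v') ≠ (u, v) := by
      intro u' v' a' hm heq
      have := hin (Act.recv u' v' a') (by
        apply List.mem_append_right
        exact List.mem_cons_of_mem _ hm)
      apply this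
      simpa [Act.subj] using congrArg Prod.snd heq
    have := steps_buf ht hno
    rw [hend (u, v)] at this
    exact hbm1 (by
      rcases List.append_eq_nil_iff.1 this.symm with ⟨h1', _⟩
      exact h1')

lemma no_self_match {i : P} {a : A} {L' : List (Act P A)} :
    ∀ {st : P → Q} {L : List (Act P A)}, Match S i st L → L = Act.send i i a :: L' → False := by
  intro st L h
  induction h with
  | nil => intro hL; cases hL
  | alt _ _ _ _ _ ih => exact ih
  | dual h1 _ _ =>
    intro hL
    obtain ⟨rfl, rfl⟩ : _ ∧ _ := by
      constructor
      · exact (List.cons.injEq _ _ _ _ ▸ hL).1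
      · exact (List.cons.injEq _ _ _ _ ▸ hL).2
    obtain ⟨p, t, hpi, hsubj, _, _⟩ := h1
    simp [Act.dual, Act.subj] at hsubj
    exact hpi hsubj.symm

lemma list_mid {α : Type*} : ∀ {β1 β2 : List α} {x y : α} {γ1 γ2 : List α},
    β1 ++ x :: γ1 = β2 ++ y :: γ2 → β1.length < β2.length →
    ∃ μ, β2 = β1 ++ x :: μ ∧ γ1 = μ ++ y :: γ2 := by
  intro β1
  induction β1 with
  | nil =>
    intro β2 x y γ1 γ2 h hlen
    cases β2 with
    | nil => simp at hlen
    | cons b β2' =>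
      simp only [List.nil_append, List.cons_append, List.cons.injEq] at h
      exact ⟨β2', by simp [h.1], h.2⟩
  | cons a β1' ih =>
    intro β2 x y γ1 γ2 h hlen
    cases β2 with
    | nil => simp at hlen
    | cons b β2' =>
      simp only [List.cons_append, List.cons.injEq] at h
      obtain ⟨μ, h1, h2⟩ := ih h.2 (by simpa using Nat.lt_of_succ_lt_succ (by simpa using hlen))
      exact ⟨μ, by simp [h.1, h1], h2⟩

lemma prefix_of_le {α : Type*} : ∀ {β1 β2 : List α} {γ1 γ2 : List α},
    β1 ++ γ1 = β2 ++ γ2 → β2.length ≤ β1.length → ∃ ρ, β1 = β2 ++ ρ := by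
  intro β1
  induction β1 with
  | nil =>
    intro β2 γ1 γ2 h hlen
    have : β2 = [] := List.length_eq_zero_iff.1 (Nat.le_zero.1 (by simpa using hlen))
    exact ⟨[], by simp [this]⟩
  | cons a β1' ih =>
    intro β2 γ1 γ2 h hlen
    cases β2 with
    | nil => exact ⟨a :: β1', by simp⟩
    | cons b β2' =>
      simp only [List.cons_append, List.cons.injEq] at h
      obtain ⟨ρ, hρ⟩ := ih h.2 (by simpa using Nat.le_of_succ_le_succ (by simpa using hlen))
      exact ⟨ρ, by simp [h.1, hρ]⟩
/-- If machine `p`'s current state has an outgoing send to `q`, then any actual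
action of `p` from that state is a send to `q`. -/
lemma first_send_shape (hB : Basic S) {d m m2 : Config P Q A} {ℓ : Act P A} {p q : P} {b : A} {t : Q}
    (hstep : Step S m ℓ m2) (hsubj : Act.subj ℓ = p) (hstp : m.st p = d.st p)
    (hd : S.delta p (d.st p) (.send p q b) t) :
    ∃ a t', ℓ = Act.send p q a ∧ S.delta p (d.st p) (Act.send p q a) t' := by
  obtain ⟨hPr, hDet, hDir, hMix⟩ := hB
  cases hstep with
  | @send u v a q1 hdel =>
    simp only [Act.subj] at hsubj
    subst hsubj
    rw [hstp] at hdel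
    have := hDir _ _ _ _ _ _ hdel hd
    simp only [Act.partner] at this
    subst this
    exact ⟨a, q1, rfl, hdel⟩
  | @recv u v a q1 w hdel hb =>
    simp only [Act.subj] at hsubj
    subst hsubj
    rw [hstp] at hdel
    have := hMix _ _ _ _ _ _ hdel hd
    simp [Act.isSend] at this

/-- If machine `q0`'s current state has an outgoing receive from `p0`, then any
actual action of `q0` from that state is a receive from `p0`. -/
lemma first_recv_shape (hB : Basic S) {d m m2 : Config P Q A} {ℓ : Act P A} {p0 q0 : P} {b : A} {t : Q}
    (hstep : Step S m ℓ m2) (hsubj : Act.subj ℓ = q0) (hstq : m.st q0 = d.st q0)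
    (hd : S.delta q0 (d.st q0) (.recv p0 q0 b) t) :
    ∃ a w, ℓ = Act.recv p0 q0 a ∧ m.buf (p0, q0) = a :: w := by
  obtain ⟨hPr, hDet, hDir, hMix⟩ := hB
  cases hstep with
  | @send u v a q1 hdel =>
    simp only [Act.subj] at hsubj
    subst hsubj
    rw [hstq] at hdel
    have := hMix _ _ _ _ _ _ hdel hd
    simp [Act.isSend] at this
  | @recv u v a q1 w hdel hb =>
    simp only [Act.subj] at hsubj
    subst hsubj
    rw [hstq] at hdel
    have := hDir _ _ _ _ _ _ hdel hd
    simp only [Act.partner] at this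
    subst this
    exact ⟨a, w, rfl, hb⟩
/-- Key progress lemma: if from a stable 1-bounded-reachable configuration `d`
there is an execution `ψ` to a stable configuration, and `ψ` is non-trivial
(machine `i` starts with a send, first in `ψ`), then some pair of machines is
synchronously enabled: `p0`'s first action in `ψ` is a send to `q0`, and `q0`'s
current local state can receive from `p0`. -/
lemma progress (hB : Basic S) (hMC : MultipartyCompatible S)
    {i : P} {d cend : Config P Q A} {ψ : List (Act P A)}
    (hR1 : Reach1 S d) (hsd : Stable d)
    (hsteps : Steps S d ψ cend) (hend : Stable cend)
    {y : P} {n : A} {β γ : List (Act P A)}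
    (hψ : ψ = β ++ Act.send i y n :: γ) (hβ : InActs i β)
    {st : P → Q} {L : List (Act P A)} (hM : Match S i st L) :
    (∃ L', L = Act.send i y n :: L') →
    (∀ x, ¬ InActs x ψ → st x = d.st x) →
    ∃ p0 q0 a0 b t β1 γ1, p0 ≠ q0 ∧ ψ = β1 ++ Act.send p0 q0 a0 :: γ1 ∧
      InActs p0 β1 ∧ S.delta q0 (d.st q0) (Act.recv p0 q0 b) t := by
  induction hM with
  | nil =>
    rintro ⟨L', hL⟩ _
    cases hL
  | @alt st st1 st2 p q a ℓs hpi hqi h1 h2 hm ih =>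
    intro hL hag
    obtain ⟨p', t1, hp'i, hsubj1, hd1, hst1eq⟩ := h1
    simp only [Act.subj] at hsubj1
    subst hsubj1
    obtain ⟨q'', t2, hq''i, hsubj2, hd2, hst2eq⟩ := h2
    simp only [Act.subj] at hsubj2
    subst hsubj2
    by_cases hact : InActs p ψ
    · -- p is inactive in ψ; show q is also inactive, and recurse
      have hq_in : InActs q ψ := by
        by_cases hq : InActs q ψ
        · exact hq
        · exfalso
          by_cases hpq : p = q
          · exact hq (hpq ▸ hact)
          · have hstq : st1 q = d.st q := by
              rw [hst1eq, Function.update_of_ne (Ne.symm hpq)]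
              exact hag q hq
            rw [hstq] at hd2
            obtain ⟨β2, ℓ2, γ2, hψ2, hβ2, hsub2⟩ := exists_first q ψ hq
            obtain ⟨m, hm1, hm2⟩ := steps_decomp (hψ2 ▸ hsteps)
            cases hm2 with
            | cons hs ht =>
              have hstq2 : m.st q = d.st q := steps_st_inacts hm1 hβ2
              obtain ⟨a2, w2, hℓ2, hbuf⟩ := first_recv_shape hB hs hsub2 hstq2 hd2
              have : m.buf (p, q) = [] :=
                buf_empty_inacts hm1 (fun x hx => hact x (hψ2 ▸ List.mem_append_left _ hx))
                  (hsd (p, q))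
              rw [this] at hbuf
              cases hbuf
      apply ih hL
      intro x hx
      rw [hst2eq, hst1eq]
      have hxq : x ≠ q := fun h => hx (h ▸ hq_in)
      have hxp : x ≠ p := fun h => hx (h ▸ hact)
      rw [Function.update_of_ne hxq, Function.update_of_ne hxp]
      exact hag x hx
    · -- p acts in ψ
      have hstp : st p = d.st p := hag p hact
      rw [hstp] at hd1
      obtain ⟨β1, ℓ1, γ1, hψ1, hβ1, hsub1⟩ := exists_first p ψ hact
      obtain ⟨m, hm1, hm2⟩ := steps_decomp (hψ1 ▸ hsteps)
      cases hm2 with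
      | cons hs ht =>
        have hstp2 : m.st p = d.st p := steps_st_inacts hm1 hβ1
        obtain ⟨a0, t', hℓ1, hd1'⟩ := first_send_shape hB hs hsub1 hstp2 hd1
        by_cases hpq : p = q
        · -- self-send: contradiction with `Match` of p itself
          exfalso
          subst hpq
          have hloc : LocalTr S p (d.st p) [Act.send p p a0] :=
            LocalTr.cons hd1' LocalTr.nil
          exact no_self_match (hMC d hR1 hsd p _ hloc) rfl
        · -- real pair found
          have hψ1' : ψ = β1 ++ Act.send p q a0 :: γ1 := by rw [hψ1, hℓ1]
          have hq_act : ¬ InActs q ψ := hψ1' ▸ acts_receiver (hψ1' ▸ hsteps) hend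
          have hstq : st1 q = d.st q := by
            rw [hst1eq, Function.update_of_ne (Ne.symm hpq)]
            exact hag q hq_act
          rw [hstq] at hd2
          exact ⟨p, q, a0, a, t2, β1, γ1, hpq, hψ1', hβ1, hd2⟩
  | @dual st st' ℓ ℓs h1 hm ih =>
    intro hL hag
    obtain ⟨L', hL⟩ := hL
    have hℓ : ℓ = Act.send i y n := (List.cons.injEq _ _ _ _ ▸ hL).1
    subst hℓ
    obtain ⟨p', t, hp'i, hsubj, hd, _⟩ := h1
    simp only [Act.dual, Act.subj] at hsubj
    subst hsubj
    have hy_act : ¬ InActs y ψ := hψ ▸ acts_receiver (hψ ▸ hsteps) hend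
    have hsty : st y = d.st y := hag y hy_act
    rw [hsty] at hd
    exact ⟨i, y, n, n, t, β, γ, Ne.symm hp'i, hψ, hβ, hd⟩
/-- Exchange-extraction: given a stable `d` with a matched pair as produced by
`progress`, we can do the exchange synchronously from `d` and shorten the
execution by two steps, staying stable and 1-bounded. -/
lemma step_down (hB : Basic S) {d cend : Config P Q A} {ψ : List (Act P A)}
    (hsd : Stable d) (hR1 : Reach1 S d)
    (hsteps : Steps S d ψ cend) (hend : Stable cend)
    {p0 q0 : P} {a0 b : A} {t : Q} {β1 γ1 : List (Act P A)}
    (hne : p0 ≠ q0) (hψ : ψ = β1 ++ Act.send p0 q0 a0 :: γ1)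
    (hβ1 : InActs p0 β1) (hrecv : S.delta q0 (d.st q0) (Act.recv p0 q0 b) t) :
    ∃ d' ψ', Stable d' ∧ Reach1 S d' ∧ Steps S d' ψ' cend ∧ ψ'.length + 2 = ψ.length := by
  -- q0 acts in ψ; get its first action
  have hq_act : ¬ InActs q0 ψ := hψ ▸ acts_receiver (hψ ▸ hsteps) hend
  obtain ⟨β2, ℓ2, γ2, hψ2, hβ2, hsub2⟩ := exists_first q0 ψ hq_act
  obtain ⟨m2, hm21, hm22⟩ := steps_decomp (hψ2 ▸ hsteps)
  cases hm22 with
  | @cons _ m3 _ _ _ hs2 ht2 =>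
    have hstq2 : m2.st q0 = d.st q0 := steps_st_inacts hm21 hβ2
    obtain ⟨a2, w2, hℓ2, hbuf2⟩ := first_recv_shape hB hs2 hsub2 hstq2 hrecv
    -- p0 acts in β2 (since the buffer is non-empty there)
    have hp0β2 : ¬ InActs p0 β2 := by
      intro hin
      have := buf_empty_inacts hm21 hin (hsd (p0, q0))
      rw [this] at hbuf2
      cases hbuf2
    have heqlists : β1 ++ Act.send p0 q0 a0 :: γ1 = β2 ++ ℓ2 :: γ2 := hψ.symm.trans hψ2
    -- hence |β1| < |β2|, so β2 = β1 ++ send :: μ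
    have hlen : β1.length < β2.length := by
      by_contra hle
      push_neg at hle
      obtain ⟨ρ, hρ⟩ := prefix_of_le heqlists hle
      exact hp0β2 fun x hx => hβ1 x (by rw [hρ]; exact List.mem_append_left ρ hx)
    obtain ⟨μ, hβ2eq, hγ1eq⟩ := list_mid heqlists hlen
    -- decompose the execution: d -β1-> m -s-> m1 -μ-> m2' -r-> m3' -γ2-> cend
    obtain ⟨m, hm1, hm2'⟩ := steps_decomp (hψ ▸ hsteps)
    cases hm2' with
    | @cons _ m1 _ _ _ hs1 ht1 =>
      -- the buffer content at m2 identifies a2 = a0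
      have hnorecv : ∀ u v aa, Act.recv u v aa ∈ β2 → (u, v) ≠ ((p0, q0) : P × P) := by
        intro u v aa hm heq
        apply hβ2 (Act.recv u v aa) hm
        simpa [Act.subj] using congrArg Prod.snd heq
      have hbufeq : m2.buf (p0, q0) = a0 :: sentOn (p0, q0) μ := by
        rw [steps_buf hm21 hnorecv, hsd (p0, q0), hβ2eq]
        rw [sentOn_append, sentOn_eq_nil hβ1, sentOn_cons_send, if_pos rfl]
        simp
      have ha2 : a2 = a0 := by
        rw [hbuf2] at hbufeq
        exact (List.cons.injEq _ _ _ _ ▸ hbufeq).1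
      rw [ha2] at hℓ2
      subst hℓ2
      -- step data for the send step
      cases hs1 with
      | @send _ _ _ t1 hd1 =>
        cases hs2 with
        | @recv _ _ _ t2 w' hd2 hb2 =>
          have hstm : m.st p0 = d.st p0 := steps_st_inacts hm1 hβ1
          rw [hstm] at hd1
          rw [hstq2] at hd2
          -- the exchange from d
          set e1 : Config P Q A := pushC p0 q0 t1 a0 d with he1
          have hstep1 : Step S d (Act.send p0 q0 a0) e1 :=
            Step.send (S := S) hd1
          have hbe1 : e1.buf (p0, q0) = [a0] := by
            simp [he1, pushC, hsd (p0, q0)]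
          set d' : Config P Q A := popC p0 q0 t2 e1 with hd'
          have hd2' : S.delta q0 (e1.st q0) (Act.recv p0 q0 a0) t2 := by
            rw [he1]
            show S.delta q0 (Function.update d.st p0 t1 q0) _ t2
            rw [Function.update_of_ne (Ne.symm hne)]
            exact hd2
          have hstep2 : Step S e1 (Act.recv p0 q0 a0) d' := by
            have h2 := Step.recv (S := S) (w := []) hd2' (by rw [hbe1])
            have hcfg : d' = ⟨Function.update e1.st q0 t2, Function.update e1.buf (p0,q0) []⟩ := by
              rw [hd']
              simp [popC, hbe1]
            rw [hcfg]
            exact h2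
          have hstd' : Stable d' := by
            intro ch
            rw [hd']
            show Function.update e1.buf (p0, q0) (e1.buf (p0,q0)).tail ch = []
            by_cases hch : ch = ((p0, q0) : P × P)
            · rw [hch, Function.update_self, hbe1]; rfl
            · rw [Function.update_of_ne hch]
              rw [he1]
              show Function.update d.buf (p0, q0) _ ch = []
              rw [Function.update_of_ne hch]
              exact hsd ch
          have hR1' : Reach1 S d' := by
            apply Reach1.step (Reach1.step hR1 hstep1 ?_) hstep2 ?_
            · intro ch
              by_cases hch : ch = ((p0, q0) : P × P)
              · rw [hch, hbe1]; simp
              · show (Function.update d.buf (p0, q0) _ ch).length ≤ 1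
                rw [Function.update_of_ne hch, hsd ch]; simp
            · intro ch
              rw [hstd' ch]; simp
          -- reorganize the execution
          rw [hγ1eq] at ht1
          obtain ⟨m2', hμ1, hμ2⟩ := steps_decomp ht1
          have hpushβ : Steps S e1 β1 (pushC p0 q0 t1 a0 m) := steps_push hm1 hβ1
          have hμin : InActs q0 μ := by
            have := hβ2eq ▸ hβ2
            exact (this.append_right).of_cons
          have hcomb : Steps S e1 (β1 ++ μ) m2' := steps_append hpushβ hμ1
          have hq0comb : InActs q0 (β1 ++ μ) := by
            intro x hx
            rcases List.mem_append.1 hx with h | h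
            · exact (hβ2eq ▸ hβ2) x (List.mem_append_left _ h)
            · exact hμin x h
          have hbe1ne : e1.buf (p0, q0) ≠ [] := by rw [hbe1]; simp
          cases hμ2 with
          | @cons _ m3' _ _ _ hs2' ht2' =>
            cases hs2' with
            | @recv _ _ _ t2' w'' hd2'' hb2'' =>
              have hstq2' : m2'.st q0 = d.st q0 := by
                have h3 := steps_st_inacts hcomb hq0comb
                rw [h3, he1]
                show Function.update d.st p0 t1 q0 = d.st q0
                rw [Function.update_of_ne (Ne.symm hne)]
              have ht2eq : t2' = t2 := by
                obtain ⟨hPr, hDet, hDir, hMix⟩ := hB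
                apply hDet q0 (d.st q0) (Act.recv p0 q0 a0)
                · rw [← hstq2']; exact hd2''
                · exact hd2
              subst ht2eq
              obtain ⟨hpop, hm2'ne⟩ := steps_pop (t2 := t2') hcomb hq0comb hbe1ne
              have hm3'pop : (⟨Function.update m2'.st q0 t2', Function.update m2'.buf (p0,q0) w''⟩ : Config P Q A)
                  = popC p0 q0 t2' m2' := by
                simp [popC, hb2'']
              rw [hm3'pop] at ht2'
              have hfinal : Steps S d' ((β1 ++ μ) ++ γ2) cend :=
                steps_append hpop ht2'
              refine ⟨d', (β1 ++ μ) ++ γ2, hstd', hR1', hfinal, ?_⟩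
              rw [hψ2, hβ2eq]
              simp [List.length_append]
              omega
/-- Every stable configuration reachable from a stable 1-bounded-reachable
configuration is itself 1-bounded reachable. -/
lemma stable_reach1 (hB : Basic S) (hMC : MultipartyCompatible S) :
    ∀ (N : ℕ) (ψ : List (Act P A)) (d c : Config P Q A), ψ.length ≤ N →
      Stable d → Reach1 S d → Steps S d ψ c → Stable c → Reach1 S c := by
  intro N
  induction N with
  | zero =>
    intro ψ d c hlen hsd hR1 hsteps hsc
    cases hsteps with
    | nil => exact hR1
    | cons _ _ => simp at hlen
  | succ N ih =>
    intro ψ d c hlen hsd hR1 hsteps hsc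
    cases hsteps with
    | nil => exact hR1
    | @cons _ c1 _ ℓ1 rest hs ht =>
      cases hs with
      | @send p q a t hd =>
        -- first action is a send; apply progress and step_down
        have hsteps' : Steps S d (Act.send p q a :: rest) c :=
          Steps.cons (Step.send hd) ht
        have hψ : (Act.send p q a :: rest) = [] ++ Act.send p q a :: rest := rfl
        have hloc : LocalTr S p (d.st p) [Act.send p q a] := LocalTr.cons hd LocalTr.nil
        have hM : Match S p d.st [Act.send p q a] := hMC d hR1 hsd p _ hloc
        obtain ⟨p0, q0, a0, b, t0, β1, γ1, hne, hψ1, hβ1, hrecv⟩ :=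
          progress hB hMC hR1 hsd hsteps' hsc hψ InActs.nil hM ⟨[], rfl⟩
            (fun x _ => rfl)
        obtain ⟨d', ψ', hstd', hR1', hsteps'', hlen'⟩ :=
          step_down hB hsd hR1 hsteps' hsc hne hψ1 hβ1 hrecv
        apply ih ψ' d' c _ hstd' hR1' hsteps'' hsc
        have : (Act.send p q a :: rest).length ≤ N + 1 := hlen
        simp at this
        omega
      | @recv p q a t w hd hb =>
        rw [hsd (p, q)] at hb
        cases hb
end DFAux

/-- a basic, multiparty compatible system is deadlock-free:
no reachable configuration is a deadlock configuration. -/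
theorem mc_deadlock_free [DecidableEq P] (S : Sys P Q A)
    (hB : Basic S) (hMC : MultipartyCompatible S) :
    ∀ c, Reach S c → ¬ Deadlock S c := by
  intro c hreach hdl
  obtain ⟨φ, hsteps⟩ := hreach
  obtain ⟨hstab, ⟨p, ℓ, q', hdelta⟩, hrecvs⟩ := hdl
  have hinit_st : Stable (initConfig S) := fun _ => rfl
  have hR1c : Reach1 S c :=
    stable_reach1 hB hMC φ.length φ (initConfig S) c le_rfl hinit_st Reach1.init hsteps hstab
  have hloc : LocalTr S p (c.st p) [ℓ] := LocalTr.cons hdelta LocalTr.nil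
  have hM : Match S p c.st [ℓ] := hMC c hR1c hstab p _ hloc
  cases hM with
  | @alt _ st1 st2 p1 q1 a1 _ hp1 hq1 h1 h2 hm =>
    obtain ⟨u, t, hui, hsubj, hdel, _⟩ := h1
    simp only [Act.subj] at hsubj
    subst hsubj
    have := hrecvs _ _ _ hdel
    simp [Act.isSend] at this
  | @dual _ st' _ _ h1 hm =>
    have hrecvℓ : Act.isSend ℓ = false := hrecvs _ _ _ hdelta
    cases ℓ with
    | send u v a => simp [Act.isSend] at hrecvℓ
    | recv u v a =>
      obtain ⟨w, t, hwi, hsubj, hdel, _⟩ := h1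
      simp only [Act.dual, Act.subj] at hsubj
      subst hsubj
      simp only [Act.dual] at hdel
      have := hrecvs _ _ _ hdel
      simp [Act.isSend] at this
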